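/- arXiv:1405.3637 — 5 statements merged into one kernel-verified Lean document; each statement's English description precedes it below -/
import Mathlib

section
/- Let A be an answer set of a ground Alog program Π. Then A satisfies every rule r of Π. -/
/- A formalization of ground Alog programs (logic programs with aggregates),
   following Gelfond & Zhang, "Vicious Circle Principle and Logic Programs
   with Aggregates". -/

namespace Alog

/-- The arithmetic relations allowed in aggregate atoms. -/
inductive AggRel : Type
  | gt | ge | lt | le | eq | ne

/-- Evaluation of an arithmetic relation on integers. -/
def AggRel.eval : AggRel → ℤ → ℤ → Prop
  | .gt, x, y => x > y
  | .ge, x, y => x ≥ y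
  | .lt, x, y => x < y
  | .le, x, y => x ≤ y
  | .eq, x, y => x = y
  | .ne, x, y => x ≠ y

/-- A ground aggregate atom `f{X̄ : cond} ⊙ n`.  `cond t` is the set of atoms
of the instance `cond(t̄)` of the condition at the tuple `t̄` of ground terms
(the type `Term` plays the role of tuples of ground terms). -/
structure AggAtom (Term Atom : Type) where
  f : Set Term → ℤ
  cond : Term → Set Atom
  rel : AggRel
  n : ℤ

variable {Term Atom : Type}

/-- An aggregate atom is true in a set `S` of ground atoms iff
`f({t̄ : every atom of cond(t̄) is in S}) ⊙ n` holds. -/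
def AggAtom.trueIn (g : AggAtom Term Atom) (S : Set Atom) : Prop :=
  g.rel.eval (g.f {t | g.cond t ⊆ S}) g.n

/-- The atoms replacing an aggregate atom in the aggregate reduct w.r.t. `S`:
all atoms of the instances `cond(t̄)` with every atom of `cond(t̄)` in `S`. -/
def AggAtom.reductAtoms (g : AggAtom Term Atom) (S : Set Atom) : Set Atom :=
  ⋃ t ∈ {t | g.cond t ⊆ S}, g.cond t

/-- A ground Alog rule: a disjunctive head, positive body atoms, atoms under
default negation, and aggregate atoms. -/
structure Rule (Term Atom : Type) where
  head : Set Atom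
  pos : Set Atom
  neg : Set Atom
  agg : Set (AggAtom Term Atom)

/-- The body of a rule is satisfied by `S`. -/
def Rule.bodySat (r : Rule Term Atom) (S : Set Atom) : Prop :=
  r.pos ⊆ S ∧ (∀ a ∈ r.neg, a ∉ S) ∧ (∀ g ∈ r.agg, g.trueIn S)

/-- A rule is satisfied by `S`: if the body is satisfied then some head atom is in `S`. -/
def Rule.sat (r : Rule Term Atom) (S : Set Atom) : Prop :=
  r.bodySat S → ∃ a ∈ r.head, a ∈ S

/-- The aggregate reduct of a single (kept) rule w.r.t. `S`: every aggregate
atom is replaced by its reduct, added to the positive body. -/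
def Rule.aggReduct (r : Rule Term Atom) (S : Set Atom) : Rule Term Atom :=
  ⟨r.head, r.pos ∪ ⋃ g ∈ r.agg, g.reductAtoms S, r.neg, ∅⟩

/-- The aggregate reduct of a program w.r.t. `S`: rules containing an aggregate
atom false in `S` are removed; in the remaining rules every aggregate atom is
replaced by its reduct w.r.t. `S`. -/
def aggReduct (P : Set (Rule Term Atom)) (S : Set Atom) : Set (Rule Term Atom) :=
  (fun r => r.aggReduct S) '' {r ∈ P | ∀ g ∈ r.agg, g.trueIn S}

/-- The Gelfond–Lifschitz reduct of a program w.r.t. `S`: rules whose `neg`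
meets `S` are removed, and `neg` is deleted from the remaining rules. -/
def glReduct (P : Set (Rule Term Atom)) (S : Set Atom) : Set (Rule Term Atom) :=
  (fun r => { r with neg := ∅ }) '' {r ∈ P | ∀ a ∈ r.neg, a ∉ S}

/-- `S` satisfies every rule of the program `P`. -/
def isModel (S : Set Atom) (P : Set (Rule Term Atom)) : Prop :=
  ∀ r ∈ P, r.sat S

/-- Standard (Gelfond–Lifschitz) answer set: `S` is a minimal set of atoms
satisfying every rule of the GL reduct of the program w.r.t. `S`. -/
def standardAnswerSet (S : Set Atom) (P : Set (Rule Term Atom)) : Prop :=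
  isModel S (glReduct P S) ∧ ∀ T ⊆ S, isModel T (glReduct P S) → T = S

/-- `S` is an answer set of a ground Alog program `P` iff `S` is a standard
answer set of the aggregate reduct of `P` w.r.t. `S`. -/
def answerSet (S : Set Atom) (P : Set (Rule Term Atom)) : Prop :=
  standardAnswerSet S (aggReduct P S)

end Alog


/-- Let `A` be an answer set of a ground Alog program `Π`.
Then `A` satisfies every rule `r` of `Π`. -/
theorem rule_satisfaction {Term Atom : Type} (P : Set (Alog.Rule Term Atom))
    (hfin : P.Finite) (A : Set Atom) (h : Alog.answerSet A P) :
    ∀ r ∈ P, r.sat A := by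
  intro r hr hbody
  obtain ⟨hpos, hneg, hagg⟩ := hbody
  have h1 : r.aggReduct A ∈ Alog.aggReduct P A := ⟨r, ⟨hr, hagg⟩, rfl⟩
  have h2 : ({ r.aggReduct A with neg := ∅ } : Alog.Rule Term Atom)
      ∈ Alog.glReduct (Alog.aggReduct P A) A :=
    ⟨r.aggReduct A, ⟨h1, hneg⟩, rfl⟩
  have hsat := h.1 _ h2
  apply hsat
  refine ⟨?_, by simp, by simp [Alog.Rule.aggReduct]⟩
  intro a ha
  rcases ha with ha | ha
  · exact hpos ha
  · simp only [Alog.AggAtom.reductAtoms, Set.mem_iUnion] at ha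
    obtain ⟨g, hg, t, ht, hat⟩ := ha
    exact ht hat
end

section
/- Let A be an answer set of a ground Alog program Π and let p ∈ A. Then there is a rule r of Π such that the body of r is satisfied by A (pos(r) ⊆ A, neg(r) ∩ A = ∅, and every aggregate atom of r is true in A) and p is the only atom in the head of r that belongs to A (r supports p). -/
/-- Let `A` be an answer set of a ground Alog program `Π` and
`p ∈ A`.  Then some rule `r` of `Π` supports `p`: the body of `r` is satisfied
by `A` and `p` is the only head atom of `r` that belongs to `A`. -/
theorem supportedness {Term Atom : Type} (P : Set (Alog.Rule Term Atom))
    (hfin : P.Finite) (A : Set Atom) (h : Alog.answerSet A P)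
    (p : Atom) (hp : p ∈ A) :
    ∃ r ∈ P, r.bodySat A ∧ p ∈ r.head ∧ ∀ q ∈ r.head, q ∈ A → q = p := by
  by_contra hcon
  push_neg at hcon
  obtain ⟨hmod, hmin⟩ := h
  have hTm : Alog.isModel (A \ {p}) (Alog.glReduct (Alog.aggReduct P A) A) := by
    intro r' hr'
    obtain ⟨r'', ⟨hr''P, hneg⟩, rfl⟩ := hr'
    obtain ⟨r, ⟨hrP, hagg⟩, rfl⟩ := hr''P
    rintro ⟨hpos, -, -⟩
    have hposA : (Alog.Rule.aggReduct r A).pos ⊆ A :=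
      hpos.trans Set.diff_subset
    have hsatA := hmod _ ⟨Alog.Rule.aggReduct r A, ⟨⟨r, ⟨hrP, hagg⟩, rfl⟩, hneg⟩, rfl⟩
    obtain ⟨a, haH, haA⟩ := hsatA ⟨hposA, by simp, by simp [Alog.Rule.aggReduct]⟩
    by_cases hap : a = p
    · subst hap
      have hbody : r.bodySat A :=
        ⟨(Set.subset_union_left).trans hposA, hneg, hagg⟩
      obtain ⟨q, hqH, hqA, hqp⟩ := hcon r hrP hbody haH
      exact ⟨q, hqH, hqA, hqp⟩
    · exact ⟨a, haH, haA, hap⟩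
  have := hmin (A \ {p}) Set.diff_subset hTm
  rw [← this] at hp
  simp at hp
end

section
/- Anti-chain property: if A₁ is an answer set of a ground Alog program Π, then there is no answer set A₂ of Π such that A₁ is a proper subset of A₂. Equivalently, any two answer sets of Π with A₁ ⊆ A₂ are equal. -/
/-- Anti-chain property: if `A₁` is an answer set of a ground
Alog program `Π`, then no answer set `A₂` of `Π` properly contains `A₁`;
equivalently, any two answer sets with `A₁ ⊆ A₂` are equal. -/
theorem antichain {Term Atom : Type} (P : Set (Alog.Rule Term Atom))
    (hfin : P.Finite) (A₁ : Set Atom) (h1 : Alog.answerSet A₁ P) :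
    (∀ A₂ : Set Atom, Alog.answerSet A₂ P → ¬ A₁ ⊂ A₂) ∧
    (∀ A₂ : Set Atom, Alog.answerSet A₂ P → A₁ ⊆ A₂ → A₁ = A₂) := by
  have key : ∀ A₂ : Set Atom, Alog.answerSet A₂ P → A₁ ⊆ A₂ → A₁ = A₂ := by
    intro A₂ h2 hsub
    apply h2.2 A₁ hsub
    rintro r ⟨r', ⟨hr'P, hneg⟩, rfl⟩
    rcases hr'P with ⟨r0, ⟨hr0P, hagg⟩, rfl⟩
    rintro ⟨hpos, -, -⟩
    have hpos1 : r0.pos ⊆ A₁ := fun a ha => hpos (Or.inl ha)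
    have hred : ∀ g ∈ r0.agg, g.reductAtoms A₂ ⊆ A₁ := by
      intro g hg a ha
      exact hpos (Or.inr (Set.mem_biUnion hg ha))
    have hsame : ∀ g ∈ r0.agg, {t | g.cond t ⊆ A₁} = {t | g.cond t ⊆ A₂} := by
      intro g hg
      apply Set.eq_of_subset_of_subset
      · intro t ht
        exact ht.trans hsub
      · intro t ht x hx
        exact hred g hg (Set.mem_biUnion ht hx)
    have haggA1 : ∀ g ∈ r0.agg, g.trueIn A₁ := by
      intro g hg
      unfold Alog.AggAtom.trueIn
      rw [hsame g hg]
      exact hagg g hg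
    have hnegA1 : ∀ a ∈ r0.neg, a ∉ A₁ := fun a ha hin => hneg a ha (hsub hin)
    have hmem : (r0.aggReduct A₁) ∈ Alog.aggReduct P A₁ := ⟨r0, ⟨hr0P, haggA1⟩, rfl⟩
    have hgl : ({r0.aggReduct A₁ with neg := ∅} : Alog.Rule Term Atom) ∈
        Alog.glReduct (Alog.aggReduct P A₁) A₁ :=
      ⟨r0.aggReduct A₁, ⟨hmem, hnegA1⟩, rfl⟩
    apply h1.1 _ hgl
    refine ⟨?_, ?_, ?_⟩
    · rintro a (ha | ha)
      · exact hpos1 ha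
      · rcases Set.mem_iUnion₂.1 ha with ⟨g, hg, hga⟩
        rcases Set.mem_iUnion₂.1 hga with ⟨t, ht, hta⟩
        exact ht hta
    · simp
    · simp [Alog.Rule.aggReduct]
  exact ⟨fun A₂ h2 hss => hss.2 (key A₂ h2 hss.1).symm.subset, key⟩
end

section
/- Splitting Set Theorem: let Π₁ and Π₂ be ground Alog programs such that no ground atom occurring anywhere in Π₁ (in heads, pos, neg, or inside aggregate conditions) occurs in the head of any rule of Π₂, and let S be a set of ground atoms containing all atoms occurring in the heads of Π₁ but no atom occurring in the heads of Π₂. Then a set A of ground atoms is an answer set of Π₁ ∪ Π₂ if and only if A ∩ S is an answer set of Π₁ and A is an answer set of the program obtained by adding each atom of A ∩ S as a fact (a rule with that atom as head and empty body) to Π₂. -/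
namespace Alog

variable {Term Atom : Type}

/-- All ground atoms occurring in a rule: in the head, `pos`, `neg`, or inside
the aggregate conditions. -/
def Rule.atoms (r : Rule Term Atom) : Set Atom :=
  r.head ∪ r.pos ∪ r.neg ∪ ⋃ g ∈ r.agg, ⋃ t, g.cond t

/-- All atoms occurring in the heads of a program. -/
def headAtoms (P : Set (Rule Term Atom)) : Set Atom :=
  ⋃ r ∈ P, r.head

/-- The fact `a`: a rule with head `a` and empty body. -/
def fact (a : Atom) : Rule Term Atom := ⟨{a}, ∅, ∅, ∅⟩

/-- The program consisting of each atom of `B` as a fact. -/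
def facts (B : Set Atom) : Set (Rule Term Atom) := fact '' B

end Alog

/-! ### Auxiliary machinery for the splitting set theorem -/

namespace Alog

variable {Term Atom : Type}

lemma head_subset_atoms {r : Rule Term Atom} : r.head ⊆ r.atoms := by
  intro a ha
  unfold Rule.atoms
  exact Set.mem_union_left _ (Set.mem_union_left _ (Set.mem_union_left _ ha))

lemma pos_subset_atoms {r : Rule Term Atom} : r.pos ⊆ r.atoms := by
  intro a ha
  unfold Rule.atoms
  exact Set.mem_union_left _ (Set.mem_union_left _ (Set.mem_union_right _ ha))

lemma neg_subset_atoms {r : Rule Term Atom} : r.neg ⊆ r.atoms := by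
  intro a ha
  unfold Rule.atoms
  exact Set.mem_union_left _ (Set.mem_union_right _ ha)

lemma cond_subset_atoms {r : Rule Term Atom} {g : AggAtom Term Atom}
    (hg : g ∈ r.agg) (t : Term) : g.cond t ⊆ r.atoms := by
  intro b hb
  unfold Rule.atoms
  exact Set.mem_union_right _ (Set.mem_biUnion hg (Set.mem_iUnion_of_mem t hb))

/-- A fully reduced rule: aggregates replaced by their reduct atoms, negation
removed. -/
def redRule (A : Set Atom) (r : Rule Term Atom) : Rule Term Atom :=
  ⟨r.head, r.pos ∪ ⋃ g ∈ r.agg, g.reductAtoms A, ∅, ∅⟩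

lemma mem_red {P : Set (Rule Term Atom)} {A : Set Atom} {r' : Rule Term Atom} :
    r' ∈ glReduct (aggReduct P A) A ↔
      ∃ r ∈ P, (∀ g ∈ r.agg, g.trueIn A) ∧ (∀ a ∈ r.neg, a ∉ A) ∧
        r' = redRule A r := by
  constructor
  · rintro ⟨q, ⟨⟨r, ⟨hrP, hagg⟩, rfl⟩, hneg⟩, rfl⟩
    exact ⟨r, hrP, hagg, hneg, rfl⟩
  · rintro ⟨r, hrP, hagg, hneg, rfl⟩
    exact ⟨r.aggReduct A, ⟨⟨r, ⟨hrP, hagg⟩, rfl⟩, hneg⟩, rfl⟩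

lemma redRule_bodySat {A X : Set Atom} {r : Rule Term Atom} :
    (redRule A r).bodySat X ↔ (redRule A r).pos ⊆ X := by
  simp [Rule.bodySat, redRule]

lemma redRule_pos_subset_atoms {A : Set Atom} {r : Rule Term Atom} :
    (redRule A r).pos ⊆ r.atoms := by
  intro a ha
  have ha' : a ∈ r.pos ∪ ⋃ g ∈ r.agg, g.reductAtoms A := ha
  rcases ha' with h | h
  · exact pos_subset_atoms h
  · obtain ⟨g, hg, h⟩ := Set.mem_iUnion₂.1 h
    obtain ⟨t, -, h⟩ := Set.mem_iUnion₂.1 h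
    exact cond_subset_atoms hg t h

lemma red_union {P Q : Set (Rule Term Atom)} {A : Set Atom} :
    glReduct (aggReduct (P ∪ Q) A) A
      = glReduct (aggReduct P A) A ∪ glReduct (aggReduct Q A) A := by
  ext r'
  simp only [Set.mem_union, mem_red]
  constructor
  · rintro ⟨r, hr | hr, h⟩
    exacts [Or.inl ⟨r, hr, h⟩, Or.inr ⟨r, hr, h⟩]
  · rintro (⟨r, hr, h⟩ | ⟨r, hr, h⟩)
    exacts [⟨r, Or.inl hr, h⟩, ⟨r, Or.inr hr, h⟩]

lemma redRule_fact {A : Set Atom} {a : Atom} :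
    redRule A (fact a : Rule Term Atom) = fact a := by
  simp [redRule, fact]

lemma red_facts {A B : Set Atom} :
    glReduct (aggReduct (facts B : Set (Rule Term Atom)) A) A = facts B := by
  ext r'
  simp only [mem_red, facts, Set.mem_image]
  constructor
  · rintro ⟨r, ⟨a, ha, rfl⟩, -, -, rfl⟩
    exact ⟨a, ha, redRule_fact.symm⟩
  · rintro ⟨a, ha, rfl⟩
    exact ⟨fact a, ⟨a, ha, rfl⟩, by simp [fact], by simp [fact], redRule_fact.symm⟩

lemma isModel_union {X : Set Atom} {P Q : Set (Rule Term Atom)} :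
    isModel X (P ∪ Q) ↔ isModel X P ∧ isModel X Q := by
  constructor
  · exact fun h => ⟨fun r hr => h r (Or.inl hr), fun r hr => h r (Or.inr hr)⟩
  · rintro ⟨h1, h2⟩ r (hr | hr)
    exacts [h1 r hr, h2 r hr]

lemma isModel_facts {X B : Set Atom} :
    isModel X (facts B : Set (Rule Term Atom)) ↔ B ⊆ X := by
  constructor
  · intro h a ha
    have hb : (fact a : Rule Term Atom).bodySat X := by
      refine ⟨?_, ?_, ?_⟩ <;> simp [fact]
    obtain ⟨b, hb1, hb2⟩ := h (fact a) ⟨a, ha, rfl⟩ hb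
    have : b = a := hb1
    rwa [this] at hb2
  · rintro h r ⟨a, ha, rfl⟩ _
    exact ⟨a, rfl, h ha⟩

lemma head_red {P : Set (Rule Term Atom)} {A : Set Atom} {r' : Rule Term Atom}
    (h : r' ∈ glReduct (aggReduct P A) A) : r'.head ⊆ headAtoms P := by
  obtain ⟨r, hr, -, -, rfl⟩ := mem_red.1 h
  intro b hb
  exact Set.mem_biUnion hr hb

lemma pos_red {P₁ P₂ : Set (Rule Term Atom)} {A : Set Atom}
    (hsep : ∀ r ∈ P₁, ∀ a ∈ r.atoms, a ∉ headAtoms P₂) {r' : Rule Term Atom}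
    (h : r' ∈ glReduct (aggReduct P₁ A) A) : ∀ a ∈ r'.pos, a ∉ headAtoms P₂ := by
  obtain ⟨r, hr, -, -, rfl⟩ := mem_red.1 h
  exact fun a ha => hsep r hr a (redRule_pos_subset_atoms ha)

lemma bodySat_red {P : Set (Rule Term Atom)} {A X : Set Atom} {r' : Rule Term Atom}
    (h : r' ∈ glReduct (aggReduct P A) A) : r'.bodySat X ↔ r'.pos ⊆ X := by
  obtain ⟨r, -, -, -, rfl⟩ := mem_red.1 h
  exact redRule_bodySat

lemma red_eq_of_coh {P₁ P₂ : Set (Rule Term Atom)} {S A : Set Atom}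
    (hsep : ∀ r ∈ P₁, ∀ a ∈ r.atoms, a ∉ headAtoms P₂)
    (hcoh : ∀ a ∈ A, a ∉ headAtoms P₂ → a ∈ S) :
    glReduct (aggReduct P₁ A) A = glReduct (aggReduct P₁ (A ∩ S)) (A ∩ S) := by
  have key : ∀ r ∈ P₁, ∀ a ∈ r.atoms, (a ∈ A ↔ a ∈ A ∩ S) := by
    intro r hr a ha
    exact ⟨fun h => ⟨h, hcoh a h (hsep r hr a ha)⟩, fun h => h.1⟩
  have hset : ∀ r ∈ P₁, ∀ g ∈ r.agg,
      {t | g.cond t ⊆ A} = {t | g.cond t ⊆ A ∩ S} := by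
    intro r hr g hg
    ext t
    simp only [Set.mem_setOf_eq]
    constructor
    · intro h b hb
      exact (key r hr b (cond_subset_atoms hg t hb)).1 (h hb)
    · intro h b hb
      exact (h hb).1
  have htrue : ∀ r ∈ P₁, ∀ g ∈ r.agg, (g.trueIn A ↔ g.trueIn (A ∩ S)) := by
    intro r hr g hg
    unfold AggAtom.trueIn
    rw [hset r hr g hg]
  have hredr : ∀ r ∈ P₁, redRule A r = redRule (A ∩ S) r := by
    intro r hr
    have h : (⋃ g ∈ r.agg, g.reductAtoms A) = ⋃ g ∈ r.agg, g.reductAtoms (A ∩ S) :=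
      Set.iUnion₂_congr fun g hg => by
        unfold AggAtom.reductAtoms
        rw [hset r hr g hg]
    unfold redRule
    rw [h]
  have hneg : ∀ r ∈ P₁, ∀ a ∈ r.neg, (a ∈ A ↔ a ∈ A ∩ S) := fun r hr a ha =>
    key r hr a (neg_subset_atoms ha)
  ext r'
  simp only [mem_red]
  constructor
  · rintro ⟨r, hr, ha, hn, rfl⟩
    exact ⟨r, hr, fun g hg => (htrue r hr g hg).1 (ha g hg),
      fun a haN h => hn a haN h.1, hredr r hr⟩
  · rintro ⟨r, hr, ha, hn, rfl⟩
    exact ⟨r, hr, fun g hg => (htrue r hr g hg).2 (ha g hg),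
      fun a haN h => hn a haN ((hneg r hr a haN).1 h), (hredr r hr).symm⟩

lemma sat_red_iff {P₁ P₂ : Set (Rule Term Atom)} {S A : Set Atom}
    (hsep : ∀ r ∈ P₁, ∀ a ∈ r.atoms, a ∉ headAtoms P₂)
    (hS1 : headAtoms P₁ ⊆ S)
    (hcoh : ∀ a ∈ A, a ∉ headAtoms P₂ → a ∈ S)
    {r' : Rule Term Atom} (h : r' ∈ glReduct (aggReduct P₁ A) A) :
    (r'.sat A ↔ r'.sat (A ∩ S)) := by
  have hhead : r'.head ⊆ S := (head_red h).trans hS1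
  have hpos := pos_red hsep h
  constructor
  · intro hs hb
    rw [bodySat_red h] at hb
    obtain ⟨b, hbh, hbA⟩ := hs ((bodySat_red h).2 (hb.trans Set.inter_subset_left))
    exact ⟨b, hbh, hbA, hhead hbh⟩
  · intro hs hb
    rw [bodySat_red h] at hb
    obtain ⟨b, hbh, hbAS⟩ := hs ((bodySat_red h).2
      fun a ha => ⟨hb ha, hcoh a (hb ha) (hpos a ha)⟩)
    exact ⟨b, hbh, hbAS.1⟩

end Alog

open Alog in
/-- Splitting Set Theorem. -/
theorem splitting_set {Term Atom : Type}
    (P₁ P₂ : Set (Alog.Rule Term Atom)) (h1 : P₁.Finite) (h2 : P₂.Finite)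
    (S : Set Atom)
    (hsep : ∀ r ∈ P₁, ∀ a ∈ r.atoms, a ∉ headAtoms P₂)
    (hS1 : headAtoms P₁ ⊆ S)
    (hS2 : ∀ a ∈ headAtoms P₂, a ∉ S)
    (A : Set Atom) :
    Alog.answerSet A (P₁ ∪ P₂) ↔
      Alog.answerSet (A ∩ S) P₁ ∧ Alog.answerSet A (facts (A ∩ S) ∪ P₂) := by
  simp only [Alog.answerSet, Alog.standardAnswerSet]
  rw [red_union, red_union, red_facts]
  constructor
  · rintro ⟨hm, hmin⟩
    obtain ⟨hm1, hm2⟩ := isModel_union.1 hm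
    have hcoh : ∀ a ∈ A, a ∉ headAtoms P₂ → a ∈ S := by
      intro a haA haH
      have hT : A ∩ (S ∪ headAtoms P₂) = A := by
        apply hmin _ Set.inter_subset_left
        rintro r' (h | h) hb
        · obtain ⟨b, hbh, hbA⟩ := hm1 _ h ((bodySat_red h).2
            (((bodySat_red h).1 hb).trans Set.inter_subset_left))
          exact ⟨b, hbh, hbA, Or.inl (((head_red h).trans hS1) hbh)⟩
        · obtain ⟨b, hbh, hbA⟩ := hm2 _ h ((bodySat_red h).2
            (((bodySat_red h).1 hb).trans Set.inter_subset_left))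
          exact ⟨b, hbh, hbA, Or.inr (head_red h hbh)⟩
      rw [← hT] at haA
      rcases haA.2 with h | h
      exacts [h, absurd h haH]
    have hQeq : glReduct (aggReduct P₁ (A ∩ S)) (A ∩ S) = glReduct (aggReduct P₁ A) A :=
      (red_eq_of_coh hsep hcoh).symm
    rw [hQeq]
    refine ⟨⟨fun r' hr' => (sat_red_iff hsep hS1 hcoh hr').1 (hm1 r' hr'), ?_⟩, ?_, ?_⟩
    · -- minimality of A ∩ S w.r.t. the reduct of P₁
      intro T hT hTm
      have hU : T ∪ (A \ S) ⊆ A := by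
        rintro a (ha | ha)
        exacts [(hT ha).1, ha.1]
      have hmod : isModel (T ∪ (A \ S))
          (glReduct (aggReduct P₁ A) A ∪ glReduct (aggReduct P₂ A) A) := by
        rintro r' (h | h) hb
        · have hbT : r'.pos ⊆ T := by
            intro a ha
            rcases (bodySat_red h).1 hb ha with h' | h'
            · exact h'
            · exact absurd (hcoh a h'.1 (pos_red hsep h a ha)) h'.2
          obtain ⟨b, hbh, hbT'⟩ := hTm _ h ((bodySat_red h).2 hbT)
          exact ⟨b, hbh, Or.inl hbT'⟩
        · obtain ⟨b, hbh, hbA⟩ := hm2 _ h ((bodySat_red h).2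
            (((bodySat_red h).1 hb).trans hU))
          exact ⟨b, hbh, Or.inr ⟨hbA, hS2 b (head_red h hbh)⟩⟩
      have hEq := hmin _ hU hmod
      apply Set.Subset.antisymm hT
      intro a ha
      have hmem : a ∈ T ∪ (A \ S) := by rw [hEq]; exact ha.1
      rcases hmem with h | h
      exacts [h, absurd ha.2 h.2]
    · rw [isModel_union, isModel_facts]
      exact ⟨Set.inter_subset_left, hm2⟩
    · -- minimality of A w.r.t. facts ∪ reduct of P₂
      intro T hTA hTm
      rw [isModel_union, isModel_facts] at hTm
      obtain ⟨hAST, hTm2⟩ := hTm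
      apply hmin _ hTA
      rintro r' (h | h) hb
      · obtain ⟨b, hbh, hbA⟩ := hm1 _ h ((bodySat_red h).2
          (((bodySat_red h).1 hb).trans hTA))
        exact ⟨b, hbh, hAST ⟨hbA, ((head_red h).trans hS1) hbh⟩⟩
      · exact hTm2 _ h hb
  · rintro ⟨⟨hm1, hmin1⟩, hm2', hmin2⟩
    obtain ⟨-, hm2⟩ := isModel_union.1 hm2'
    have hcoh : ∀ a ∈ A, a ∉ headAtoms P₂ → a ∈ S := by
      intro a haA haH
      have hT : A ∩ (S ∪ headAtoms P₂) = A := by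
        apply hmin2 _ Set.inter_subset_left
        rw [isModel_union, isModel_facts]
        refine ⟨fun b hb => ⟨hb.1, Or.inl hb.2⟩, ?_⟩
        intro r' h hb
        obtain ⟨b, hbh, hbA⟩ := hm2 _ h ((bodySat_red h).2
          (((bodySat_red h).1 hb).trans Set.inter_subset_left))
        exact ⟨b, hbh, hbA, Or.inr (head_red h hbh)⟩
      rw [← hT] at haA
      rcases haA.2 with h | h
      exacts [h, absurd h haH]
    have hQeq : glReduct (aggReduct P₁ (A ∩ S)) (A ∩ S) = glReduct (aggReduct P₁ A) A :=
      (red_eq_of_coh hsep hcoh).symm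
    rw [hQeq] at hm1 hmin1
    constructor
    · rw [isModel_union]
      exact ⟨fun r' hr' => (sat_red_iff hsep hS1 hcoh hr').2 (hm1 r' hr'), hm2⟩
    · intro T hTA hTm
      obtain ⟨hTm1, hTm2⟩ := isModel_union.1 hTm
      have hTS : T ∩ S = A ∩ S := by
        apply hmin1 _ (Set.inter_subset_inter hTA (subset_refl S))
        intro r' hr' hb
        obtain ⟨b, hbh, hbT⟩ := hTm1 _ hr' ((bodySat_red hr').2
          (((bodySat_red hr').1 hb).trans Set.inter_subset_left))
        exact ⟨b, hbh, hbT, ((head_red hr').trans hS1) hbh⟩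
      apply hmin2 _ hTA
      rw [isModel_union, isModel_facts]
      exact ⟨by rw [← hTS]; exact Set.inter_subset_left, hTm2⟩
end

section
/- Let A₁ and A₂ be answer sets of a ground Alog program Π with A₁ ⊆ A₂. Then A₁ satisfies every rule of the aggregate reduct of Π with respect to A₂. -/
/-- Let `A₁` and `A₂` be answer sets of a ground Alog program `Π`
with `A₁ ⊆ A₂`.  Then `A₁` satisfies every rule of the aggregate reduct of `Π`
with respect to `A₂`. -/
theorem subset_answerSet_sat_reduct {Term Atom : Type}
    (P : Set (Alog.Rule Term Atom)) (hfin : P.Finite)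
    (A₁ A₂ : Set Atom)
    (h1 : Alog.answerSet A₁ P) (h2 : Alog.answerSet A₂ P)
    (hsub : A₁ ⊆ A₂) :
    ∀ r ∈ Alog.aggReduct P A₂, r.sat A₁ := by
  rintro r' ⟨r, ⟨hrP, hagg2⟩, rfl⟩ hb
  obtain ⟨hpos, hneg, -⟩ := hb
  have hposA : r.pos ⊆ A₁ := fun a ha => hpos (Or.inl ha)
  have hred : ∀ g ∈ r.agg, g.reductAtoms A₂ ⊆ A₁ := by
    intro g hg a ha
    exact hpos (Or.inr (Set.mem_biUnion hg ha))
  have hsetEq : ∀ g ∈ r.agg, {t | g.cond t ⊆ A₁} = {t | g.cond t ⊆ A₂} := by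
    intro g hg
    ext t
    constructor
    · intro ht; exact fun a ha => hsub (ht ha)
    · intro ht a ha
      exact hred g hg (Set.mem_biUnion ht ha)
  have hagg1 : ∀ g ∈ r.agg, g.trueIn A₁ := by
    intro g hg
    have := hagg2 g hg
    unfold Alog.AggAtom.trueIn at *
    rw [hsetEq g hg]
    exact this
  have hredEq : ∀ g ∈ r.agg, g.reductAtoms A₁ = g.reductAtoms A₂ := by
    intro g hg
    unfold Alog.AggAtom.reductAtoms
    rw [hsetEq g hg]
  -- the GL-reduct rule of r.aggReduct A₁ w.r.t. A₁
  have hmem : ({ (r.aggReduct A₁) with neg := ∅ } : Alog.Rule Term Atom)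
      ∈ Alog.glReduct (Alog.aggReduct P A₁) A₁ := by
    refine ⟨r.aggReduct A₁, ⟨⟨r, ⟨hrP, hagg1⟩, rfl⟩, ?_⟩, rfl⟩
    intro a ha
    exact hneg a ha
  have hsat := h1.1 _ hmem
  have hbody : (({ (r.aggReduct A₁) with neg := ∅ } : Alog.Rule Term Atom)).bodySat A₁ := by
    refine ⟨?_, ?_, ?_⟩
    · rintro a (ha | ha)
      · exact hposA ha
      · simp only [Set.mem_iUnion] at ha
        obtain ⟨g, hg, ha⟩ := ha
        rw [hredEq g hg] at ha
        exact hred g hg ha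
    · intro a ha; exact absurd ha (Set.notMem_empty a)
    · intro g hg; exact absurd hg (Set.notMem_empty g)
  exact hsat hbody
end
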